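/- (p-Fermat–Torricelli problem.) Let (X,‖·‖) be a real normed space, n ≥ 2, v_1,…,v_n ∈ X distinct, p ∈ (1,∞), and q ∈ (1,∞) with 1/p + 1/q = 1. Define f(u) := (Σ_{i=1}^n ‖u − v_i‖^p)^{1/p} for u ∈ X. Then: (a) ū ∈ X is a global minimizer of f if and only if there exist x*_1,…,x*_n ∈ X* such that Σ_{i=1}^n x*_i = 0, Σ_{i=1}^n ‖x*_i‖*^q = 1, and for every i = 1,…,n: ⟨x*_i, ū − v_i⟩ = ‖x*_i‖*·‖ū − v_i‖ and ‖x*_i‖*^q = ‖ū − v_i‖^p / (Σ_{j=1}^n ‖ū − v_j‖^p). (b) If x*_1,…,x*_n are as in (a), then the set of all global minimizers of f equals ∩_{i=1}^n ({u ∈ X : ⟨x*_i, u − v_i⟩ = ‖x*_i‖*·‖u − v_i‖} ∩ {u ∈ X : ‖x*_i‖*^q = ‖u − v_i‖^p / (Σ_{j=1}^n ‖u − v_j‖^p)}). -/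

import Mathlib

open Finset Filter Topology

section Aux
variable {X : Type*} [NormedAddCommGroup X] [NormedSpace ℝ X]

noncomputable def qfun (x h : X) (t : ℝ) : ℝ := (‖x + t • h‖ - ‖x‖) / t

lemma qfun_mono (x h : X) {s t : ℝ} (hs : 0 < s) (hst : s ≤ t) :
    qfun x h s ≤ qfun x h t := by
  have ht : 0 < t := hs.trans_le hst
  have key : t * ‖x + s • h‖ ≤ s * ‖x + t • h‖ + (t - s) * ‖x‖ := by
    have hc : t • (x + s • h) = s • (x + t • h) + (t - s) • x := by module
    calc t * ‖x + s • h‖ = ‖t • (x + s • h)‖ := by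
          rw [norm_smul, Real.norm_eq_abs, abs_of_pos ht]
      _ = ‖s • (x + t • h) + (t - s) • x‖ := by rw [hc]
      _ ≤ ‖s • (x + t • h)‖ + ‖(t - s) • x‖ := norm_add_le _ _
      _ = s * ‖x + t • h‖ + (t - s) * ‖x‖ := by
          rw [norm_smul, norm_smul, Real.norm_eq_abs, Real.norm_eq_abs,
            abs_of_pos hs, abs_of_nonneg (by linarith)]
  rw [qfun, qfun, div_le_div_iff₀ hs ht]
  nlinarith [key]

lemma qfun_le_norm (x h : X) {t : ℝ} (ht : 0 < t) : qfun x h t ≤ ‖h‖ := by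
  rw [qfun, div_le_iff₀ ht]
  have := norm_add_le x (t • h)
  rw [norm_smul, Real.norm_eq_abs, abs_of_pos ht] at this
  linarith

lemma neg_norm_le_qfun (x h : X) {t : ℝ} (ht : 0 < t) : -‖h‖ ≤ qfun x h t := by
  rw [qfun, le_div_iff₀ ht]
  have := norm_add_le (x + t • h) (-(t • h))
  rw [add_neg_cancel_right, norm_neg, norm_smul, Real.norm_eq_abs, abs_of_pos ht] at this
  linarith

noncomputable def Nd (x h : X) : ℝ := ⨅ m : ℕ, qfun x h (1 / (m + 1))

lemma Nd_bdd (x h : X) : BddBelow (Set.range fun m : ℕ => qfun x h (1 / (m + 1))) := by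
  refine ⟨-‖h‖, ?_⟩
  rintro r ⟨m, rfl⟩
  exact neg_norm_le_qfun x h (by positivity)

lemma Nd_le_qfun (x h : X) {t : ℝ} (ht : 0 < t) : Nd x h ≤ qfun x h t := by
  obtain ⟨m, hm⟩ := exists_nat_one_div_lt ht
  calc Nd x h ≤ qfun x h (1 / (m + 1)) := ciInf_le (Nd_bdd x h) m
    _ ≤ qfun x h t := qfun_mono x h (by positivity) hm.le

lemma neg_norm_le_Nd (x h : X) : -‖h‖ ≤ Nd x h :=
  le_ciInf fun m => neg_norm_le_qfun x h (by positivity)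

lemma Nd_le_norm (x h : X) : Nd x h ≤ ‖h‖ :=
  (Nd_le_qfun x h one_pos).trans (qfun_le_norm x h one_pos)

lemma tendsto_qfun_Nd (x h : X) {t : ℕ → ℝ} (htpos : ∀ m, 0 < t m)
    (ht0 : Filter.Tendsto t atTop (𝓝 0)) :
    Filter.Tendsto (fun m => qfun x h (t m)) atTop (𝓝 (Nd x h)) := by
  rw [tendsto_order]
  constructor
  · intro a ha
    exact Filter.Eventually.of_forall fun m => ha.trans_le (Nd_le_qfun x h (htpos m))
  · intro a ha
    obtain ⟨m₀, hm₀⟩ := exists_lt_of_ciInf_lt (show Nd x h < a from ha)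
    have hs : (0:ℝ) < 1 / (m₀ + 1) := by positivity
    filter_upwards [ht0.eventually_lt_const hs] with m hm
    exact lt_of_le_of_lt (qfun_mono x h (htpos m) hm.le) hm₀

lemma tendsto_seq_Nd (x h : X) :
    Filter.Tendsto (fun m : ℕ => qfun x h (1 / (m + 1))) atTop (𝓝 (Nd x h)) :=
  tendsto_qfun_Nd x h (fun m => by positivity) (tendsto_one_div_add_atTop_nhds_zero_nat)

lemma Nd_zero (x : X) : Nd x 0 = 0 := by
  have : ∀ m : ℕ, qfun x (0 : X) (1 / (m + 1)) = 0 := by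
    intro m; simp [qfun]
  unfold Nd; simp_rw [this]; exact ciInf_const

lemma Nd_add (x h₁ h₂ : X) : Nd x (h₁ + h₂) ≤ Nd x h₁ + Nd x h₂ := by
  have key : ∀ t : ℝ, 0 < t → qfun x (h₁ + h₂) t ≤ qfun x h₁ (2 * t) + qfun x h₂ (2 * t) := by
    intro t ht
    have hc : (2:ℝ) • (x + t • (h₁ + h₂)) = (x + (2*t) • h₁) + (x + (2*t) • h₂) := by module
    have hn : 2 * ‖x + t • (h₁ + h₂)‖ ≤ ‖x + (2*t) • h₁‖ + ‖x + (2*t) • h₂‖ := by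
      calc 2 * ‖x + t • (h₁ + h₂)‖ = ‖(2:ℝ) • (x + t • (h₁ + h₂))‖ := by
            rw [norm_smul]; norm_num
        _ = ‖(x + (2*t) • h₁) + (x + (2*t) • h₂)‖ := by rw [hc]
        _ ≤ _ := norm_add_le _ _
    rw [qfun, qfun, qfun, ← add_div, div_le_div_iff₀ ht (by linarith)]
    nlinarith [hn]
  have lim1 : Filter.Tendsto (fun m : ℕ => qfun x h₁ (2 * (1 / (m+1))) + qfun x h₂ (2 * (1/(m+1))))
      atTop (𝓝 (Nd x h₁ + Nd x h₂)) := by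
    have h0 : Filter.Tendsto (fun m : ℕ => 2 * (1/(m+1) : ℝ)) atTop (𝓝 0) := by
      have := (tendsto_one_div_add_atTop_nhds_zero_nat).const_mul (2:ℝ)
      simpa using this
    exact (tendsto_qfun_Nd x h₁ (fun m => by positivity) h0).add
      (tendsto_qfun_Nd x h₂ (fun m => by positivity) h0)
  refine ge_of_tendsto lim1 (Filter.Eventually.of_forall fun m => ?_)
  exact (Nd_le_qfun x (h₁ + h₂) (show (0:ℝ) < 1/(m+1) by positivity)).trans
    (key _ (by positivity))

lemma Nd_smul (x h : X) {c : ℝ} (hc : 0 < c) : Nd x (c • h) = c * Nd x h := by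
  have key : ∀ t : ℝ, 0 < t → qfun x (c • h) t = c * qfun x h (c * t) := by
    intro t ht
    rw [qfun, qfun, smul_smul, mul_comm t c]
    field_simp
  have lim1 : Filter.Tendsto (fun m : ℕ => qfun x (c • h) (1/(m+1))) atTop (𝓝 (c * Nd x h)) := by
    have h0 : Filter.Tendsto (fun m : ℕ => c * (1/(m+1) : ℝ)) atTop (𝓝 0) := by
      have := (tendsto_one_div_add_atTop_nhds_zero_nat).const_mul c
      simpa using this
    have := (tendsto_qfun_Nd x h (fun m => by positivity) h0).const_mul c
    refine this.congr fun m => ?_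
    rw [key _ (by positivity)]
  exact tendsto_nhds_unique (tendsto_seq_Nd x (c • h)) lim1

lemma Nd_self (x : X) : Nd x x = ‖x‖ := by
  have : ∀ m : ℕ, qfun x x (1 / (m + 1)) = ‖x‖ := by
    intro m
    have ht : (0:ℝ) < 1/(m+1) := by positivity
    rw [qfun]
    rw [show x + (1/(m+1):ℝ) • x = (1 + 1/(m+1) : ℝ) • x by module]
    rw [norm_smul, Real.norm_eq_abs, abs_of_pos (by positivity)]
    field_simp
    ring
  unfold Nd; simp_rw [this]; exact ciInf_const

lemma Nd_neg_self (x : X) : Nd x (-x) = -‖x‖ := by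
  have : ∀ m : ℕ, qfun x (-x) (1 / (m + 1)) = -‖x‖ := by
    intro m
    have h1 : (1:ℝ)/(m+1) ≤ 1 := by
      rw [div_le_one (by positivity)]; norm_num
    have ht : (0:ℝ) < 1/(m+1) := by positivity
    rw [qfun]
    rw [show x + (1/(m+1):ℝ) • (-x) = (1 - 1/(m+1) : ℝ) • x by module]
    rw [norm_smul, Real.norm_eq_abs, abs_of_nonneg (by linarith)]
    field_simp
    ring
  unfold Nd; simp_rw [this]; exact ciInf_const

lemma rpow_tangent {p : ℝ} (hp : 1 < p) {a b : ℝ} (ha : 0 ≤ a) (hb : 0 ≤ b) :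
    a ^ p - b ^ p ≤ p * a ^ (p - 1) * (a - b) := by
  rcases eq_or_lt_of_le ha with h0 | h0
  · rw [← h0]
    rw [Real.zero_rpow (by positivity), Real.zero_rpow (by linarith)]
    have : (0:ℝ) ≤ b ^ p := Real.rpow_nonneg hb p
    nlinarith
  · have hber := one_add_mul_self_le_rpow_one_add
      (show (-1:ℝ) ≤ (b - a)/a by rw [le_div_iff₀ h0]; linarith) hp.le
    rw [show (1:ℝ) + (b-a)/a = b/a by field_simp; ring] at hber
    rw [Real.div_rpow hb h0.le] at hber
    have hap : (0:ℝ) < a ^ p := Real.rpow_pos_of_pos h0 p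
    rw [le_div_iff₀ hap] at hber
    have hsub : a ^ (p - 1) = a ^ p / a := by
      rw [Real.rpow_sub h0, Real.rpow_one]
    have key : (1 + p * ((b - a) / a)) * a ^ p = a ^ p + p * (b - a) * (a ^ p / a) := by
      field_simp
    rw [key] at hber
    rw [hsub]
    nlinarith [hber]

lemma min_key {n : ℕ} (v : Fin n → X) {p : ℝ} (hp : 1 < p) (ub : X)
    (hmin : ∀ u : X, (∑ i, ‖ub - v i‖ ^ p) ≤ (∑ i, ‖u - v i‖ ^ p)) (h : X) :
    0 ≤ ∑ i, ‖ub - v i‖ ^ (p - 1) * Nd (ub - v i) h := by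
  set x : Fin n → X := fun i => ub - v i with hx
  have step1 : ∀ t : ℝ, 0 < t →
      0 ≤ ∑ i, p * ‖x i + t • h‖ ^ (p - 1) * qfun (x i) h t := by
    intro t ht
    have h1 : (∑ i, ‖x i‖ ^ p) ≤ ∑ i, ‖x i + t • h‖ ^ p := by
      have := hmin (ub + t • h)
      simpa [hx, add_sub_assoc, sub_add_eq_add_sub, add_comm (t • h)] using this
    have h2 : ∀ i : Fin n, ‖x i + t • h‖ ^ p - ‖x i‖ ^ p ≤
        p * ‖x i + t • h‖ ^ (p - 1) * (qfun (x i) h t * t) := by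
      intro i
      have := rpow_tangent hp (norm_nonneg (x i + t • h)) (norm_nonneg (x i))
      rw [qfun, div_mul_cancel₀ _ ht.ne']
      exact this
    have h3 : 0 ≤ ∑ i, p * ‖x i + t • h‖ ^ (p - 1) * (qfun (x i) h t * t) := by
      calc (0:ℝ) ≤ ∑ i, (‖x i + t • h‖ ^ p - ‖x i‖ ^ p) := by
            rw [Finset.sum_sub_distrib]; linarith
        _ ≤ _ := Finset.sum_le_sum fun i _ => h2 i
    have h4 : ∑ i, p * ‖x i + t • h‖ ^ (p - 1) * (qfun (x i) h t * t)
        = (∑ i, p * ‖x i + t • h‖ ^ (p - 1) * qfun (x i) h t) * t := by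
      rw [Finset.sum_mul]; congr 1; ext i; ring
    rw [h4] at h3
    exact nonneg_of_mul_nonneg_left h3 ht
  have lim : Filter.Tendsto
      (fun m : ℕ => ∑ i, p * ‖x i + (1/(m+1) : ℝ) • h‖ ^ (p - 1) * qfun (x i) h (1/(m+1)))
      atTop (𝓝 (∑ i, p * ‖x i‖ ^ (p - 1) * Nd (x i) h)) := by
    apply tendsto_finset_sum
    intro i _
    have hbase : Filter.Tendsto (fun m : ℕ => ‖x i + (1/(m+1) : ℝ) • h‖) atTop (𝓝 ‖x i‖) := by
      have h0 : Filter.Tendsto (fun m : ℕ => ((1:ℝ)/(m+1)) • h) atTop (𝓝 ((0:ℝ) • h)) :=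
        tendsto_one_div_add_atTop_nhds_zero_nat.smul_const h
      rw [zero_smul] at h0
      have := (tendsto_const_nhds (x := x i) (f := atTop (α := ℕ))).add h0
      rw [add_zero] at this
      exact this.norm
    have hrpow : Filter.Tendsto (fun m : ℕ => ‖x i + (1/(m+1) : ℝ) • h‖ ^ (p-1)) atTop
        (𝓝 (‖x i‖ ^ (p-1))) :=
      ((Real.continuousAt_rpow_const _ _ (Or.inr (by linarith))).tendsto.comp hbase)
    exact ((hrpow.const_mul p).mul (tendsto_seq_Nd (x i) h))
  have h5 : 0 ≤ ∑ i, p * ‖x i‖ ^ (p - 1) * Nd (x i) h :=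
    ge_of_tendsto lim (Filter.Eventually.of_forall fun m => step1 _ (by positivity))
  have h6 : ∑ i, p * ‖x i‖ ^ (p - 1) * Nd (x i) h
      = p * ∑ i, ‖x i‖ ^ (p - 1) * Nd (x i) h := by
    rw [Finset.mul_sum]; congr 1; ext i; ring
  rw [h6] at h5
  exact nonneg_of_mul_nonneg_right h5 (by linarith)

lemma exists_dual_construction {n : ℕ} (x : Fin n → X) {p : ℝ} (hp : 1 < p)
    (hmin : ∀ h : X, 0 ≤ ∑ i, ‖x i‖ ^ (p - 1) * Nd (x i) h) :
    ∃ G : Fin n → (X →L[ℝ] ℝ),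
      (∑ i, G i) = 0 ∧ ∀ i, ‖G i‖ = ‖x i‖ ^ (p - 1) ∧
        G i (x i) = ‖x i‖ ^ (p - 1) * ‖x i‖ := by
  classical
  set c : Fin n → ℝ := fun i => ‖x i‖ ^ (p - 1) with hcdef
  have hcn : ∀ i, 0 ≤ c i := fun i => Real.rpow_nonneg (norm_nonneg _) _
  set N : (Fin n → X) → ℝ := fun w => ∑ i, c i * Nd (x i) (w i) with hNdef
  have N_hom : ∀ r : ℝ, 0 < r → ∀ w, N (r • w) = r * N w := by
    intro r hr w
    simp only [hNdef, Pi.smul_apply, Nd_smul _ _ hr, Finset.mul_sum]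
    exact Finset.sum_congr rfl fun i _ => by ring
  have N_add : ∀ w₁ w₂ : Fin n → X, N (w₁ + w₂) ≤ N w₁ + N w₂ := by
    intro w₁ w₂
    rw [hNdef, ← Finset.sum_add_distrib]
    refine Finset.sum_le_sum fun i _ => ?_
    have := Nd_add (x i) (w₁ i) (w₂ i)
    calc c i * Nd (x i) ((w₁ + w₂) i) ≤ c i * (Nd (x i) (w₁ i) + Nd (x i) (w₂ i)) := by
          exact mul_le_mul_of_nonneg_left (by simpa using this) (hcn i)
      _ = c i * Nd (x i) (w₁ i) + c i * Nd (x i) (w₂ i) := by ring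
  let dgl : X →ₗ[ℝ] (Fin n → X) := LinearMap.pi fun _ => LinearMap.id
  let f : (Fin n → X) →ₗ.[ℝ] ℝ := ⟨LinearMap.range dgl, 0⟩
  have hf : ∀ w : f.domain, f w ≤ N w := by
    rintro ⟨w, hw⟩
    obtain ⟨h, rfl⟩ := hw
    have : f ⟨dgl h, ⟨h, rfl⟩⟩ = 0 := rfl
    rw [this]
    simpa [hNdef, dgl] using hmin h
  obtain ⟨g, hg0, hgN⟩ := exists_extension_of_le_sublinear f N N_hom N_add hf
  have hdiag : ∀ h : X, g (fun _ => h) = 0 := by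
    intro h
    have h1 : ((fun _ => h) : Fin n → X) ∈ f.domain := ⟨h, rfl⟩
    have := hg0 ⟨_, h1⟩
    exact this
  have hbound : ∀ i h, g (Pi.single i h) ≤ c i * Nd (x i) h := by
    intro i h
    refine (hgN _).trans_eq ?_
    have hNs : N (Pi.single i h) = ∑ j, c j * Nd (x j) ((Pi.single i h : Fin n → X) j) := by
      rw [hNdef]
    rw [hNs, Finset.sum_eq_single i]
    · rw [Pi.single_eq_same]
    · intro j _ hj
      rw [Pi.single_eq_of_ne hj, Nd_zero, mul_zero]
    · intro hi; exact absurd (Finset.mem_univ i) hi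
  have habs : ∀ i h, |g (Pi.single i h)| ≤ c i * ‖h‖ := by
    intro i h
    rw [abs_le]
    constructor
    · have h1 := hbound i (-h)
      have h2 : (Pi.single i (-h) : Fin n → X) = -(Pi.single i h) := by
        ext j; by_cases hj : j = i
        · subst hj; simp
        · simp [Pi.single_eq_of_ne hj]
      rw [h2, map_neg] at h1
      have := (Nd_le_norm (x i) (-h))
      rw [norm_neg] at this
      nlinarith [mul_le_mul_of_nonneg_left this (hcn i)]
    · exact (hbound i h).trans (mul_le_mul_of_nonneg_left (Nd_le_norm _ _) (hcn i))
  have hval : ∀ i, g (Pi.single i (x i)) = c i * ‖x i‖ := by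
    intro i
    have h1 := hbound i (x i)
    rw [Nd_self] at h1
    have h2 := hbound i (-(x i))
    have h3 : (Pi.single i (-(x i)) : Fin n → X) = -(Pi.single i (x i)) := by
      ext j; by_cases hj : j = i
      · subst hj; simp
      · simp [Pi.single_eq_of_ne hj]
    rw [h3, map_neg, Nd_neg_self] at h2
    linarith [h1, h2]
  -- continuous versions
  let Gl : Fin n → (X →ₗ[ℝ] ℝ) := fun i => g.comp (LinearMap.single ℝ (fun _ : Fin n => X) i)
  have hGl : ∀ i h, Gl i h = g (Pi.single i h) := fun i h => by
    simp only [Gl, LinearMap.comp_apply, LinearMap.single_apply]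
  let G : Fin n → (X →L[ℝ] ℝ) := fun i => LinearMap.mkContinuous (Gl i) (c i)
    (fun h => by rw [hGl, Real.norm_eq_abs]; exact habs i h)
  refine ⟨G, ?_, fun i => ⟨?_, ?_⟩⟩
  · ext h
    have hGs : (∑ i, G i) h = ∑ i, g (Pi.single i h) := by
      rw [ContinuousLinearMap.sum_apply]
      refine Finset.sum_congr rfl fun j _ => ?_
      show (Gl j).mkContinuous (c j) _ h = _
      rw [LinearMap.mkContinuous_apply, hGl]
    rw [hGs]
    have h2 : ∑ i, g (Pi.single i h) = g (∑ i, Pi.single i h) := (map_sum g _ _).symm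
    rw [h2]
    have h3 : (∑ i : Fin n, Pi.single i h) = (fun _ => h) := by
      have := Finset.univ_sum_single (fun _ => h : Fin n → X)
      exact this
    rw [h3, hdiag]
    rfl
  · -- norm
    refine le_antisymm (LinearMap.mkContinuous_norm_le _ (hcn i) _) ?_
    rcases eq_or_lt_of_le (norm_nonneg (x i)) with h0 | h0
    · have hci : ‖x i‖ ^ (p - 1) = 0 := by
        rw [← h0]; exact Real.zero_rpow (by linarith)
      rw [hci]
      exact norm_nonneg _
    · have h1 : G i (x i) = c i * ‖x i‖ := hval i
      have h2 : G i (x i) ≤ ‖G i‖ * ‖x i‖ := by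
        calc G i (x i) ≤ |G i (x i)| := le_abs_self _
          _ = ‖G i (x i)‖ := (Real.norm_eq_abs _).symm
          _ ≤ ‖G i‖ * ‖x i‖ := ContinuousLinearMap.le_opNorm _ _
      rw [h1] at h2
      exact le_of_mul_le_mul_right h2 h0
  · show (Gl i).mkContinuous (c i) _ (x i) = _
    rw [LinearMap.mkContinuous_apply, hGl]
    exact hval i

lemma young_eq {a b P Q : ℝ} (ha : 0 ≤ a) (hb : 0 ≤ b) (hP : 1 < P) (hQ : 1 < Q)
    (hPQ : 1 / P + 1 / Q = 1) (heq : a * b = a ^ P / P + b ^ Q / Q) : a ^ P = b ^ Q := by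
  have hP0 : P ≠ 0 := by linarith
  have hQ0 : Q ≠ 0 := by linarith
  rcases eq_or_lt_of_le ha with h0 | h0
  · rw [← h0, zero_mul, Real.zero_rpow hP0, zero_div, zero_add] at heq
    have hbQ : b ^ Q = 0 := by
      have h2 := heq.symm
      rw [div_eq_zero_iff] at h2
      rcases h2 with h2 | h2
      · exact h2
      · exact absurd h2 hQ0
    rw [← h0, Real.zero_rpow hP0, hbQ]
  · rcases eq_or_lt_of_le hb with h1 | h1
    · exfalso
      rw [← h1, mul_zero, Real.zero_rpow hQ0, zero_div, add_zero] at heq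
      have ha1 : a ^ P > 0 := Real.rpow_pos_of_pos h0 P
      have ha2 : a ^ P / P > 0 := by positivity
      linarith [heq]
    · by_contra hne
      set uu := P * Real.log a with huu
      set ww := Q * Real.log b with hww
      have hu : Real.exp uu = a ^ P := by
        rw [huu, Real.rpow_def_of_pos h0, mul_comm]
      have hw : Real.exp ww = b ^ Q := by
        rw [hww, Real.rpow_def_of_pos h1, mul_comm]
      have hne' : uu ≠ ww := fun hc => hne (by rw [← hu, ← hw, hc])
      have key := strictConvexOn_exp.2 (Set.mem_univ uu) (Set.mem_univ ww) hne'
        (by positivity : (0:ℝ) < 1/P) (by positivity : (0:ℝ) < 1/Q) hPQ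
      rw [smul_eq_mul, smul_eq_mul, smul_eq_mul, smul_eq_mul] at key
      have hL : (1/P) * uu + (1/Q) * ww = Real.log a + Real.log b := by
        rw [huu, hww]; field_simp
      rw [hL, Real.exp_add, Real.exp_log h0, Real.exp_log h1, hu, hw] at key
      rw [one_div_mul_eq_div, one_div_mul_eq_div] at key
      linarith [heq, key]

lemma sum_rpow_pos {n : ℕ} (hn : 2 ≤ n) (v : Fin n → X) (hv : Function.Injective v)
    {p : ℝ} (hp : 1 < p) (u : X) : 0 < ∑ i, ‖u - v i‖ ^ p := by
  have hex : ∃ i, u ≠ v i := by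
    by_contra hc
    push_neg at hc
    have h01 : (⟨0, by omega⟩ : Fin n) ≠ (⟨1, by omega⟩ : Fin n) := by
      simp [Fin.ext_iff]
    exact h01 (hv ((hc ⟨0, by omega⟩).symm.trans (hc ⟨1, by omega⟩)))
  obtain ⟨i, hi⟩ := hex
  refine Finset.sum_pos' (fun j _ => Real.rpow_nonneg (norm_nonneg _) _) ⟨i, Finset.mem_univ i, ?_⟩
  have : 0 < ‖u - v i‖ := by
    rw [norm_pos_iff, sub_ne_zero]; exact hi
  exact Real.rpow_pos_of_pos this p

lemma norm_sum_calc {n : ℕ} (v : Fin n → X) {p q : ℝ} (hp : 1 < p) (hq : 1 < q)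
    (hpq : 1 / p + 1 / q = 1) (w : X) (hS : 0 < ∑ j, ‖w - v j‖ ^ p)
    (a : Fin n → ℝ) (han : ∀ i, 0 ≤ a i)
    (hcond : ∀ i, a i ^ q = ‖w - v i‖ ^ p / ∑ j, ‖w - v j‖ ^ p) :
    (∑ i, a i * ‖w - v i‖) = (∑ j, ‖w - v j‖ ^ p) ^ (1/p) ∧ (∑ i, a i ^ q) = 1 := by
  have hp0 : p ≠ 0 := by linarith
  have hq0 : q ≠ 0 := by linarith
  have hq' : 1/q = 1 - 1/p := by linarith
  have hSne : (∑ j, ‖w - v j‖ ^ p) ≠ 0 := hS.ne'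
  constructor
  · have key : ∀ i, a i * ‖w - v i‖ = ‖w - v i‖ ^ p / (∑ j, ‖w - v j‖ ^ p) ^ (1/q) := by
      intro i
      have ha' : a i = (‖w - v i‖ ^ p / ∑ j, ‖w - v j‖ ^ p) ^ (1/q) := by
        rw [← hcond i, ← Real.rpow_mul (han i), mul_one_div, div_self hq0, Real.rpow_one]
      rw [ha', Real.div_rpow (Real.rpow_nonneg (norm_nonneg _) _) hS.le,
        ← Real.rpow_mul (norm_nonneg _)]
      have h1 : p * (1/q) = p - 1 := by
        rw [hq', mul_sub, mul_one, mul_one_div, div_self hp0]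
      rw [h1]
      have hsplit : ‖w - v i‖ ^ (p - 1) * ‖w - v i‖ ^ (1:ℝ) = ‖w - v i‖ ^ p := by
        rw [← Real.rpow_add' (norm_nonneg _) (by simp; linarith)]
        norm_num
      rw [div_mul_eq_mul_div, ← hsplit, Real.rpow_one]
    rw [Finset.sum_congr rfl fun i _ => key i, ← Finset.sum_div]
    rw [show (1:ℝ)/p = 1 - 1/q by linarith, Real.rpow_sub hS, Real.rpow_one]
  · calc ∑ i, a i ^ q = ∑ i, ‖w - v i‖ ^ p / (∑ j, ‖w - v j‖ ^ p) :=
        Finset.sum_congr rfl fun i _ => hcond i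
      _ = (∑ i, ‖w - v i‖ ^ p) / (∑ j, ‖w - v j‖ ^ p) := by rw [← Finset.sum_div]
      _ = 1 := div_self hSne

lemma sum_apply_shift {n : ℕ} (xs : Fin n → (X →L[ℝ] ℝ)) (hsum0 : (∑ i, xs i) = 0)
    (y : Fin n → X) (u w : X) : ∑ i, xs i (u - y i) = ∑ i, xs i (w - y i) := by
  have h3 : ∑ i, (xs i (u - y i) - xs i (w - y i)) = (∑ i, xs i) (u - w) := by
    rw [ContinuousLinearMap.sum_apply]
    refine Finset.sum_congr rfl fun i _ => ?_
    rw [← map_sub]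
    congr 1
    abel
  rw [hsum0, ContinuousLinearMap.zero_apply, Finset.sum_sub_distrib] at h3
  linarith

lemma holder_step {n : ℕ} {p q : ℝ} (hp : 1 < p) (hq : 1 < q) (hpq : 1 / p + 1 / q = 1)
    (xs : Fin n → (X →L[ℝ] ℝ)) (hB : (∑ i, ‖xs i‖ ^ q) = 1) (y : Fin n → X) (u : X) :
    ∑ i, ‖xs i‖ * ‖u - y i‖ ≤ (∑ i, ‖u - y i‖ ^ p) ^ (1/p) := by
  have hH := Real.inner_le_Lp_mul_Lq (Finset.univ) (fun i => ‖xs i‖) (fun i => ‖u - y i‖)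
    (Real.holderConjugate_iff.mpr ⟨hq, by rw [← one_div, ← one_div]; linarith⟩ : Real.HolderConjugate q p)
  simp only [abs_norm] at hH
  rw [hB, Real.one_rpow, one_mul] at hH
  exact hH

lemma suff_min {n : ℕ} (hn : 2 ≤ n) (v : Fin n → X) (hv : Function.Injective v)
    {p q : ℝ} (hp : 1 < p) (hq : 1 < q) (hpq : 1 / p + 1 / q = 1)
    (w : X) (xs : Fin n → (X →L[ℝ] ℝ)) (hsum0 : (∑ i, xs i) = 0)
    (hcond : ∀ i, xs i (w - v i) = ‖xs i‖ * ‖w - v i‖ ∧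
      ‖xs i‖ ^ q = ‖w - v i‖ ^ p / ∑ j, ‖w - v j‖ ^ p) :
    ∀ u : X, (∑ i, ‖w - v i‖ ^ p) ^ (1/p) ≤ (∑ i, ‖u - v i‖ ^ p) ^ (1/p) := by
  intro u
  have hSw := sum_rpow_pos hn v hv hp w
  obtain ⟨hA, hB⟩ := norm_sum_calc v hp hq hpq w hSw (fun i => ‖xs i‖)
    (fun i => norm_nonneg _) (fun i => (hcond i).2)
  have h1 : ∑ i, xs i (w - v i) = (∑ j, ‖w - v j‖ ^ p) ^ (1/p) := by
    rw [← hA]; exact Finset.sum_congr rfl fun i _ => (hcond i).1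
  have h2 := sum_apply_shift xs hsum0 v u w
  have h4 : ∑ i, xs i (u - v i) ≤ ∑ i, ‖xs i‖ * ‖u - v i‖ :=
    Finset.sum_le_sum fun i _ => (le_abs_self _).trans
      (by rw [← Real.norm_eq_abs]; exact (xs i).le_opNorm _)
  have h5 := holder_step hp hq hpq xs hB v u
  calc (∑ i, ‖w - v i‖ ^ p) ^ (1/p) = ∑ i, xs i (u - v i) := by rw [h2, h1]
    _ ≤ _ := h4.trans h5

end Aux

theorem stmt_19 {X : Type*} [NormedAddCommGroup X] [NormedSpace ℝ X]
    (n : ℕ) (hn : 2 ≤ n) (v : Fin n → X) (hv : Function.Injective v)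
    (p q : ℝ) (hp : 1 < p) (hq : 1 < q) (hpq : 1 / p + 1 / q = 1) :
    (∀ ub : X,
      (∀ u : X, (∑ i, ‖ub - v i‖ ^ p) ^ (1 / p) ≤ (∑ i, ‖u - v i‖ ^ p) ^ (1 / p)) ↔
        ∃ xs : Fin n → (X →L[ℝ] ℝ),
          (∑ i, xs i) = 0 ∧ (∑ i, ‖xs i‖ ^ q) = 1 ∧
          ∀ i, xs i (ub - v i) = ‖xs i‖ * ‖ub - v i‖ ∧
            ‖xs i‖ ^ q = ‖ub - v i‖ ^ p / ∑ j, ‖ub - v j‖ ^ p) ∧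
    (∀ ub : X, ∀ xs : Fin n → (X →L[ℝ] ℝ),
      (∀ u : X, (∑ i, ‖ub - v i‖ ^ p) ^ (1 / p) ≤ (∑ i, ‖u - v i‖ ^ p) ^ (1 / p)) →
      (∑ i, xs i) = 0 → (∑ i, ‖xs i‖ ^ q) = 1 →
      (∀ i, xs i (ub - v i) = ‖xs i‖ * ‖ub - v i‖ ∧
        ‖xs i‖ ^ q = ‖ub - v i‖ ^ p / ∑ j, ‖ub - v j‖ ^ p) →
      {u : X | ∀ w : X,
          (∑ i, ‖u - v i‖ ^ p) ^ (1 / p) ≤ (∑ i, ‖w - v i‖ ^ p) ^ (1 / p)} =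
        ⋂ i, ({u : X | xs i (u - v i) = ‖xs i‖ * ‖u - v i‖} ∩
          {u : X | ‖xs i‖ ^ q = ‖u - v i‖ ^ p / ∑ j, ‖u - v j‖ ^ p})) := by
  have hp0 : p ≠ 0 := by linarith
  have hq0 : q ≠ 0 := by linarith
  have hpq2 : (p - 1) * q = p := by
    have h1 : q + p = p * q := by field_simp at hpq; linarith [hpq]
    nlinarith [h1]
  have hSpos : ∀ u : X, 0 < ∑ i, ‖u - v i‖ ^ p := sum_rpow_pos hn v hv hp
  constructor
  · intro ub
    constructor
    · -- minimizer → exists xs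
      intro hmin
      have hmin' : ∀ u : X, (∑ i, ‖ub - v i‖ ^ p) ≤ ∑ i, ‖u - v i‖ ^ p := by
        intro u
        by_contra hlt
        push_neg at hlt
        have := Real.rpow_lt_rpow (hSpos u).le hlt (by positivity : (0:ℝ) < 1/p)
        linarith [hmin u]
      obtain ⟨G, hGsum, hG⟩ := exists_dual_construction (fun i => ub - v i) hp
        (min_key v hp ub hmin')
      have hS : 0 < ∑ i, ‖ub - v i‖ ^ p := hSpos ub
      have hSrt : 0 < (∑ i, ‖ub - v i‖ ^ p) ^ (1/q : ℝ) := Real.rpow_pos_of_pos hS _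
      set r : ℝ := ((∑ i, ‖ub - v i‖ ^ p) ^ (1/q : ℝ))⁻¹ with hrdef
      have hr : 0 < r := by positivity
      have hrq : r ^ q = (∑ i, ‖ub - v i‖ ^ p)⁻¹ := by
        rw [hrdef, ← Real.rpow_neg hS.le, ← Real.rpow_mul hS.le,
          show -(1/q) * q = -1 by field_simp, Real.rpow_neg_one]
      have hnorm : ∀ i, ‖r • G i‖ = r * ‖ub - v i‖ ^ (p - 1) := by
        intro i
        have hns := norm_smul r (G i)
        rw [Real.norm_eq_abs, abs_of_pos hr, (hG i).1] at hns
        exact hns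
      have hcondq : ∀ i, ‖r • G i‖ ^ q = ‖ub - v i‖ ^ p / ∑ j, ‖ub - v j‖ ^ p := by
        intro i
        rw [hnorm i, Real.mul_rpow hr.le (Real.rpow_nonneg (norm_nonneg _) _), hrq,
          ← Real.rpow_mul (norm_nonneg _), hpq2, inv_mul_eq_div]
      refine ⟨fun i => r • G i, ?_, ?_, fun i => ⟨?_, hcondq i⟩⟩
      · rw [← Finset.smul_sum, hGsum, smul_zero]
      · rw [Finset.sum_congr rfl fun i _ => hcondq i, ← Finset.sum_div, div_self hS.ne']
      · rw [ContinuousLinearMap.smul_apply, (hG i).2, hnorm i, smul_eq_mul]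
        ring
    · intro ⟨xs, h0, h1, h2⟩
      exact suff_min hn v hv hp hq hpq ub xs h0 h2
  · -- part (b)
    intro ub xs hmin h0 h1 h2
    ext u
    simp only [Set.mem_setOf_eq, Set.mem_iInter, Set.mem_inter_iff]
    have hSub := hSpos ub
    have hSu := hSpos u
    constructor
    · intro hu
      have heqS : (∑ j, ‖u - v j‖ ^ p) ^ (1/p : ℝ) = (∑ j, ‖ub - v j‖ ^ p) ^ (1/p : ℝ) :=
        le_antisymm (hu ub) (hmin u)
      obtain ⟨hA, hB⟩ := norm_sum_calc v hp hq hpq ub hSub (fun i => ‖xs i‖)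
        (fun i => norm_nonneg _) (fun i => (h2 i).2)
      have hchain1 : ∑ i, xs i (u - v i) = (∑ j, ‖u - v j‖ ^ p) ^ (1/p : ℝ) := by
        rw [sum_apply_shift xs h0 v u ub, heqS, ← hA]
        exact Finset.sum_congr rfl fun i _ => (h2 i).1
      have h4 : ∀ i, xs i (u - v i) ≤ ‖xs i‖ * ‖u - v i‖ := fun i =>
        (le_abs_self _).trans (by rw [← Real.norm_eq_abs]; exact (xs i).le_opNorm _)
      have h5 := holder_step hp hq hpq xs h1 v u
      have hsum_eq : ∑ i, ‖xs i‖ * ‖u - v i‖ = (∑ j, ‖u - v j‖ ^ p) ^ (1/p : ℝ) :=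
        le_antisymm h5 (by rw [← hchain1]; exact Finset.sum_le_sum fun i _ => h4 i)
      have hcond1 : ∀ i, xs i (u - v i) = ‖xs i‖ * ‖u - v i‖ := by
        have hz : ∑ i, (‖xs i‖ * ‖u - v i‖ - xs i (u - v i)) = 0 := by
          rw [Finset.sum_sub_distrib, hsum_eq, hchain1, sub_self]
        intro i
        have := (Finset.sum_eq_zero_iff_of_nonneg
          (fun i _ => sub_nonneg.2 (h4 i))).1 hz i (Finset.mem_univ i)
        linarith
      refine fun i => ⟨hcond1 i, ?_⟩
      -- Young equality
      have hT : 0 < (∑ j, ‖u - v j‖ ^ p) ^ (1/p : ℝ) := Real.rpow_pos_of_pos hSu _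
      set T := (∑ j, ‖u - v j‖ ^ p) ^ (1/p : ℝ) with hTdef
      set b : Fin n → ℝ := fun i => ‖u - v i‖ / T with hbdef
      have hbn : ∀ i, 0 ≤ b i := fun i => by positivity
      have hTp : T ^ p = ∑ j, ‖u - v j‖ ^ p := by
        rw [hTdef, ← Real.rpow_mul hSu.le, one_div, inv_mul_cancel₀ hp0, Real.rpow_one]
      have hbp : ∑ i, b i ^ p = 1 := by
        have : ∀ i, b i ^ p = ‖u - v i‖ ^ p / (∑ j, ‖u - v j‖ ^ p) := by
          intro i
          rw [hbdef, Real.div_rpow (norm_nonneg _) hT.le, hTp]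
        rw [Finset.sum_congr rfl fun i _ => this i, ← Finset.sum_div, div_self hSu.ne']
      have hab : ∑ i, ‖xs i‖ * b i = 1 := by
        have : ∀ i, ‖xs i‖ * b i = ‖xs i‖ * ‖u - v i‖ / T := fun i => by
          rw [hbdef]; ring
        rw [Finset.sum_congr rfl fun i _ => this i, ← Finset.sum_div, hsum_eq,
          div_self hT.ne']
      have hyoung : ∀ i, ‖xs i‖ * b i ≤ ‖xs i‖ ^ q / q + b i ^ p / p := fun i =>
        Real.young_inequality_of_nonneg (norm_nonneg _) (hbn i)
          (Real.holderConjugate_iff.mpr ⟨hq, by rw [← one_div, ← one_div]; linarith⟩ : Real.HolderConjugate q p)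
      have hyeq : ∀ i, ‖xs i‖ * b i = ‖xs i‖ ^ q / q + b i ^ p / p := by
        have hz : ∑ i, (‖xs i‖ ^ q / q + b i ^ p / p - ‖xs i‖ * b i) = 0 := by
          rw [Finset.sum_sub_distrib, Finset.sum_add_distrib, ← Finset.sum_div, ← Finset.sum_div,
            h1, hbp, hab]
          field_simp
          linarith
        intro i
        have := (Finset.sum_eq_zero_iff_of_nonneg
          (fun i _ => sub_nonneg.2 (hyoung i))).1 hz i (Finset.mem_univ i)
        linarith
      have := young_eq (norm_nonneg (xs i)) (hbn i) hq hp (by linarith) (hyeq i)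
      rw [this, hbdef]
      rw [Real.div_rpow (norm_nonneg _) hT.le, hTp]
    · intro hu
      exact suff_min hn v hv hp hq hpq u xs h0 (fun i => ⟨(hu i).1, (hu i).2⟩)
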